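/- With W̃ as defined via W̃(R, e, c) := max{ |e + ∑_{l∈R} Y_l c|, λ·max_{R'⊆R} |e + ∑_{l∈R'} Y_l c| }, for λ ∈ (0,1), pairwise-disjoint projections Y_l, and any m ∈ R, it holds that W̃(R \ {m}, e + Y_m c, c) ≤ W̃(R, e, c). -/
import Mathlib


/-- Diagonal 0-1 projection onto the coordinates in `S`. -/
noncomputable def diagProj {n : ℕ} (S : Finset (Fin n))
    (v : EuclideanSpace ℝ (Fin n)) : EuclideanSpace ℝ (Fin n) :=
  (WithLp.equiv 2 (Fin n → ℝ)).symm (fun j => if j ∈ S then v j else 0)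

/-- W̃(R, e, c) := max{ |e + ∑_{l∈R} Y_l c|, λ·max_{R'⊆R} |e + ∑_{l∈R'} Y_l c| }. -/
noncomputable def Wtil {n : ℕ} {ι : Type*} [DecidableEq ι]
    (S : ι → Finset (Fin n)) (lam : ℝ) (R : Finset ι)
    (e c : EuclideanSpace ℝ (Fin n)) : ℝ :=
  max ‖e + ∑ l ∈ R, diagProj (S l) c‖
    (lam * R.powerset.sup' (Finset.powerset_nonempty R)
      (fun R' => ‖e + ∑ l ∈ R', diagProj (S l) c‖))

/-- for any m ∈ R, W̃(R \ {m}, e + Y_m c, c) ≤ W̃(R, e, c). -/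
theorem stmt4 {n : ℕ} {ι : Type*} [DecidableEq ι]
    (S : ι → Finset (Fin n))
    (hdisj : ∀ l m, l ≠ m → Disjoint (S l) (S m))
    (R : Finset ι) (e c : EuclideanSpace ℝ (Fin n))
    (lam : ℝ) (hlam : lam ∈ Set.Ioo (0:ℝ) 1)
    (m : ι) (hm : m ∈ R) :
    Wtil S lam (R.erase m) (e + diagProj (S m) c) c ≤ Wtil S lam R e c := by
  obtain ⟨hl0, _⟩ := hlam
  have key : ∀ R' : Finset ι, m ∉ R' →
      ‖(e + diagProj (S m) c) + ∑ l ∈ R', diagProj (S l) c‖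
        = ‖e + ∑ l ∈ insert m R', diagProj (S l) c‖ := by
    intro R' hm'
    rw [Finset.sum_insert hm', add_assoc]
  unfold Wtil
  apply max_le_max
  · rw [key _ (Finset.notMem_erase m R), Finset.insert_erase hm]
  · apply mul_le_mul_of_nonneg_left _ hl0.le
    apply Finset.sup'_le
    intro R' hR'
    rw [Finset.mem_powerset] at hR'
    have hm' : m ∉ R' := fun h => Finset.notMem_erase m R (hR' h)
    rw [key _ hm']
    exact Finset.le_sup' (fun R' => ‖e + ∑ l ∈ R', diagProj (S l) c‖) (Finset.mem_powerset.mpr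
      (Finset.insert_subset hm (hR'.trans (Finset.erase_subset m R))))
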